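/- Let R be a commutative ring, a ∈ R, and n ∈ ℕ. Then the quotient ring R[X_0,…,X_n]/(X_0⋯X_n − a) is a free R-module with basis the images of the monomials X^μ = X_0^{μ_0}⋯X_n^{μ_n} for which min_j μ_j = 0 (equivalently, the monomials not divisible by X_0⋯X_n). -/

import Mathlib

open MvPolynomial Finsupp

section Aux
variable {R : Type*} [CommRing R] {n : ℕ}

noncomputable def one1 (n : ℕ) : Fin (n+1) →₀ ℕ :=
  Finsupp.equivFunOnFinite.symm fun _ => 1

@[simp] lemma one1_apply (j : Fin (n+1)) : one1 n j = 1 := rfl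

def mmin (μ : Fin (n+1) →₀ ℕ) : ℕ :=
  Finset.univ.inf' ⟨0, Finset.mem_univ 0⟩ μ

lemma mmin_le (μ : Fin (n+1) →₀ ℕ) (j : Fin (n+1)) : mmin μ ≤ μ j :=
  Finset.inf'_le _ (Finset.mem_univ j)

lemma exists_mmin (μ : Fin (n+1) →₀ ℕ) : ∃ j, μ j = mmin μ := by
  obtain ⟨j, -, hj⟩ := Finset.exists_mem_eq_inf' (⟨0, Finset.mem_univ (0 : Fin (n+1))⟩) μ
  exact ⟨j, hj.symm⟩

noncomputable def rres (μ : Fin (n+1) →₀ ℕ) : Fin (n+1) →₀ ℕ := μ - mmin μ • one1 n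

lemma rres_apply (μ : Fin (n+1) →₀ ℕ) (j : Fin (n+1)) : rres μ j = μ j - mmin μ := by
  simp [rres, Finsupp.sub_apply]

lemma rres_spec (μ : Fin (n+1) →₀ ℕ) : ∃ j, rres μ j = 0 := by
  obtain ⟨j, hj⟩ := exists_mmin μ
  exact ⟨j, by simp [rres_apply, hj]⟩

lemma rres_add_smul (μ : Fin (n+1) →₀ ℕ) : rres μ + mmin μ • one1 n = μ := by
  ext j
  simp [rres_apply, Nat.sub_add_cancel (mmin_le μ j)]

lemma mmin_eq_zero {μ : Fin (n+1) →₀ ℕ} (h : ∃ j, μ j = 0) : mmin μ = 0 := by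
  obtain ⟨j, hj⟩ := h
  exact Nat.le_antisymm (hj ▸ mmin_le μ j) (Nat.zero_le _)

lemma rres_eq_self {μ : Fin (n+1) →₀ ℕ} (h : ∃ j, μ j = 0) : rres μ = μ := by
  ext j; simp [rres_apply, mmin_eq_zero h]

lemma mmin_add_one (μ : Fin (n+1) →₀ ℕ) : mmin (μ + one1 n) = mmin μ + 1 := by
  apply Nat.le_antisymm
  · obtain ⟨j, hj⟩ := exists_mmin μ
    have := mmin_le (μ + one1 n) j
    simpa [hj] using this
  · apply Finset.le_inf'
    intro j _
    simpa using Nat.add_le_add_right (mmin_le μ j) 1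

lemma rres_add_one (μ : Fin (n+1) →₀ ℕ) : rres (μ + one1 n) = rres μ := by
  ext j; simp [rres_apply, mmin_add_one]

end Aux

section Main
variable {R : Type*} [CommRing R] (a : R) (n : ℕ)

local notation "S" => {μ : Fin (n + 1) →₀ ℕ // ∃ j, μ j = 0}

noncomputable def Pa : MvPolynomial (Fin (n+1)) R := (∏ i : Fin (n + 1), X i) - C a

noncomputable def g0 : MvPolynomial (Fin (n+1)) R →ₗ[R] (S →₀ R) :=
  (Finsupp.lsum R fun μ : Fin (n+1) →₀ ℕ =>
    (a ^ mmin μ) • Finsupp.lsingle (⟨rres μ, rres_spec μ⟩ : S) :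
    ((Fin (n+1) →₀ ℕ) →₀ R) →ₗ[R] (S →₀ R)) ∘ₗ
    (AddMonoidAlgebra.coeffLinearEquiv R).toLinearMap

lemma g0_monomial (μ : Fin (n+1) →₀ ℕ) (c : R) :
    g0 a n (monomial μ c) = Finsupp.single (⟨rres μ, rres_spec μ⟩ : S) (a ^ mmin μ * c) := by
  show Finsupp.lsum R _ (Finsupp.single μ c) = _
  simp [Finsupp.lsum_single, Finsupp.smul_single]

lemma prod_X_eq : (∏ i : Fin (n + 1), X i : MvPolynomial (Fin (n+1)) R) = monomial (one1 n) 1 := by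
  rw [monomial_eq]
  simp [one1, Finsupp.prod]
  congr 1
  ext; simp

lemma g0_mul_P (q : MvPolynomial (Fin (n+1)) R) : g0 a n (q * Pa a n) = 0 := by
  have : (g0 a n) ∘ₗ (LinearMap.mulRight R (Pa a n)) = 0 := by
    apply MvPolynomial.linearMap_ext
    intro μ
    apply LinearMap.ext
    intro c
    show g0 a n ((monomial μ c : MvPolynomial (Fin (n+1)) R) * Pa a n) = 0
    rw [Pa, mul_sub, prod_X_eq, monomial_mul, mul_comm (monomial μ c) (C a), C_mul_monomial,
      map_sub, g0_monomial, g0_monomial, sub_eq_zero]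
    have h1 : (⟨rres (μ + one1 n), rres_spec _⟩ : S) = ⟨rres μ, rres_spec μ⟩ :=
      Subtype.ext (rres_add_one μ)
    rw [h1, mmin_add_one, pow_succ]
    congr 1
    ring
  exact DFunLike.congr_fun this q


noncomputable def f0 : (S →₀ R) →ₗ[R] MvPolynomial (Fin (n+1)) R :=
  Finsupp.linearCombination R fun μ : S => monomial μ.1 (1 : R)

lemma f0_single (μ : S) (c : R) : f0 n (Finsupp.single μ c) = monomial μ.1 c := by
  simp [f0, Finsupp.linearCombination_single, smul_monomial]

lemma g0_f0 (x : S →₀ R) : g0 a n (f0 n x) = x := by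
  have : (g0 a n) ∘ₗ (f0 n) = LinearMap.id := by
    apply Finsupp.lhom_ext'
    intro μ
    apply LinearMap.ext
    intro c
    show g0 a n (f0 n (Finsupp.single μ c)) = Finsupp.single μ c
    rw [f0_single, g0_monomial, mmin_eq_zero μ.2, pow_zero, one_mul]
    congr 1
    exact Subtype.ext (rres_eq_self μ.2)
  exact DFunLike.congr_fun this x

noncomputable def fQ : (S →₀ R) →ₗ[R]
    (MvPolynomial (Fin (n+1)) R ⧸ Ideal.span {Pa a n}) :=
  (Ideal.Quotient.mkₐ R (Ideal.span {Pa a n})).toLinearMap ∘ₗ f0 n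

lemma fQ_single (μ : S) (c : R) :
    fQ a n (Finsupp.single μ c) = Ideal.Quotient.mk _ (monomial μ.1 c) := by
  simp [fQ, f0_single]

lemma fQ_injective : Function.Injective (fQ a n) := by
  rw [← LinearMap.ker_eq_bot, LinearMap.ker_eq_bot']
  intro x hx
  have hx' : Ideal.Quotient.mk (Ideal.span {Pa a n}) (f0 n x) = 0 := hx
  have hmem : f0 n x ∈ Ideal.span {Pa a n} := Ideal.Quotient.eq_zero_iff_mem.mp hx'
  obtain ⟨q, hq⟩ := Ideal.mem_span_singleton'.mp hmem
  have h := g0_f0 a n x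
  rw [← hq, g0_mul_P] at h
  exact h.symm

lemma mk_monomial (μ : Fin (n+1) →₀ ℕ) (c : R) :
    Ideal.Quotient.mk (Ideal.span {Pa a n}) (monomial μ c)
      = Ideal.Quotient.mk _ (monomial (rres μ) (a ^ mmin μ * c)) := by
  have h1 : Ideal.Quotient.mk (Ideal.span {Pa a n}) (∏ i : Fin (n + 1), X i)
      = Ideal.Quotient.mk _ (C a) := by
    rw [Ideal.Quotient.mk_eq_mk_iff_sub_mem]
    exact Ideal.subset_span rfl
  have h2 : (monomial μ c : MvPolynomial (Fin (n+1)) R)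
      = monomial (rres μ) c * (∏ i : Fin (n + 1), X i) ^ mmin μ := by
    rw [prod_X_eq, monomial_pow, monomial_mul, one_pow, mul_one, rres_add_smul]
  rw [h2, map_mul, map_pow, h1, ← map_pow, ← map_mul, ← C_pow, mul_comm, C_mul_monomial]

lemma fQ_surjective : Function.Surjective (fQ a n) := by
  rw [← LinearMap.range_eq_top]
  rw [eq_top_iff]
  intro y _
  obtain ⟨p, rfl⟩ := Ideal.Quotient.mk_surjective y
  induction p using MvPolynomial.induction_on' with
  | monomial μ c =>
      rw [mk_monomial]
      exact ⟨Finsupp.single ⟨rres μ, rres_spec μ⟩ (a ^ mmin μ * c), fQ_single a n _ _⟩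
  | add p q hp hq =>
      rw [map_add]
      exact Submodule.add_mem _ (hp trivial) (hq trivial)

end Main

theorem standard_ring_free_basis (R : Type*) [CommRing R] (a : R) (n : ℕ) :
    ∃ b : Module.Basis {μ : Fin (n + 1) →₀ ℕ // ∃ j, μ j = 0} R
        (MvPolynomial (Fin (n + 1)) R ⧸
          Ideal.span ({(∏ i : Fin (n + 1), X i) - C a} :
            Set (MvPolynomial (Fin (n + 1)) R))),
      ∀ μ : {μ : Fin (n + 1) →₀ ℕ // ∃ j, μ j = 0},
        b μ = Ideal.Quotient.mk _ (monomial μ.1 (1 : R)) := by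
  refine ⟨Module.Basis.ofRepr
    (LinearEquiv.ofBijective (fQ a n) ⟨fQ_injective a n, fQ_surjective a n⟩).symm,
    fun μ => ?_⟩
  show fQ a n (Finsupp.single μ 1) = _
  exact fQ_single a n μ 1
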